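/- Let n ≥ m ≥ 2 be integers, let S ⊆ {1,…,n} with |S| = m, and let t be a real number with (m−1)/(2m) ≤ t ≤ 1/2. Then the Lebesgue volume of the set {x ∈ [0,1]^n : Σ_{i∉S} x_i − Σ_{i∈S} x_i ≥ (m−1)/(2t) + n − 2m} equals (1/n!) · (m − (m−1)/(2t))^n. -/

import Mathlib

open MeasureTheory Finset ENNReal

lemma simplex_measurable (n : ℕ) (c : ℝ) :
    MeasurableSet {x : Fin n → ℝ | (∀ i, 0 ≤ x i) ∧ ∑ i, x i ≤ c} := by
  have : {x : Fin n → ℝ | (∀ i, 0 ≤ x i) ∧ ∑ i, x i ≤ c} =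
      (⋂ i, {x : Fin n → ℝ | 0 ≤ x i}) ∩ {x : Fin n → ℝ | ∑ i, x i ≤ c} := by
    ext x; simp [Set.mem_iInter]
  rw [this]
  exact (MeasurableSet.iInter fun i =>
      measurableSet_le measurable_const (measurable_pi_apply i)).inter
    (measurableSet_le (by fun_prop) measurable_const)

/-- Volume of the corner simplex `{x : 0 ≤ x, ∑ x ≤ c}` is `cⁿ / n!`. -/
lemma simplex_vol (n : ℕ) (hn : 0 < n) (c : ℝ) (hc : 0 ≤ c) :
    volume {x : Fin n → ℝ | (∀ i, 0 ≤ x i) ∧ ∑ i, x i ≤ c} =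
      ENNReal.ofReal (c ^ n / n.factorial) := by
  have : Nonempty (Fin n) := ⟨⟨0, hn⟩⟩
  set A : Set (Fin n → ℝ) := {x | (∀ i, 0 ≤ x i) ∧ ∑ i, x i ≤ c} with hA
  have hAm : MeasurableSet A := simplex_measurable n c
  -- the reflection maps
  set f : (Fin n → Bool) → (Fin n → ℝ) → (Fin n → ℝ) :=
    fun ε x i => if ε i then x i else -x i with hf_def
  have hf : ∀ ε, MeasurePreserving (f ε) volume volume := by
    intro ε
    apply volume_preserving_pi (f := fun i (u : ℝ) => if ε i then u else -u)
    intro i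
    by_cases h : ε i
    · simp only [h, if_true, ↓reduceIte]; exact MeasurePreserving.id (volume : Measure ℝ)
    · simpa [h] using Measure.measurePreserving_neg (volume : Measure ℝ)
  -- the cross-polytope decomposes into reflected copies of the simplex
  have hB : {x : Fin n → ℝ | ∑ i, |x i| ≤ c} = ⋃ ε ∈ Finset.univ, f ε ⁻¹' A := by
    ext x
    simp only [Set.mem_setOf_eq, Set.mem_iUnion, Finset.mem_univ, exists_prop, true_and,
      Set.mem_preimage, hA, hf_def]
    constructor
    · intro hx
      refine ⟨fun i => decide (0 ≤ x i), fun i => ?_, ?_⟩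
      · beta_reduce
        by_cases h : 0 ≤ x i
        · rw [decide_eq_true h]; simpa using h
        · rw [decide_eq_false h]; simp only [Bool.false_eq_true, if_false]
          simp only [Left.nonneg_neg_iff]; linarith [not_le.mp h]
      · calc ∑ i, (if (decide (0 ≤ x i) : Bool) then x i else -x i) = ∑ i, |x i| := by
              refine Finset.sum_congr rfl fun i _ => ?_
              by_cases h : 0 ≤ x i
              · simp [h, abs_of_nonneg h]
              · simp [h, abs_of_neg (not_le.mp h)]
            _ ≤ c := hx
    · rintro ⟨ε, h1, h2⟩
      have : ∑ i, |x i| = ∑ i, (if ε i then x i else -x i) := by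
        refine Finset.sum_congr rfl fun i _ => ?_
        cases h : ε i
        · have := h1 i
          rw [h] at this
          simp only [Bool.false_eq_true, if_false, Left.nonneg_neg_iff] at this ⊢
          exact abs_of_nonpos this
        · have := h1 i
          rw [h] at this
          simp only [if_true] at this ⊢
          exact abs_of_nonneg this
      rw [this]; exact h2
  -- pairwise a.e.-disjointness
  have hdisj : Set.Pairwise (↑(Finset.univ : Finset (Fin n → Bool)))
      (Function.onFun (AEDisjoint volume) fun ε => f ε ⁻¹' A) := by
    intro ε _ ε' _ hne
    obtain ⟨i, hi⟩ := Function.ne_iff.mp hne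
    have hnull : volume {x : Fin n → ℝ | x i = 0} = 0 := by
      rw [volume_pi]; exact Measure.pi_hyperplane _ i 0
    refine measure_mono_null ?_ hnull
    rintro x ⟨hx1, hx2⟩
    have h1 := hx1.1 i
    have h2 := hx2.1 i
    simp only [hf_def] at h1 h2
    show x i = 0
    cases hb : ε i <;> cases hb' : ε' i
    · exact absurd (hb.trans hb'.symm) hi
    · rw [hb] at h1; rw [hb'] at h2
      simp only [Bool.false_eq_true, if_false, if_true, Left.nonneg_neg_iff] at h1 h2
      linarith
    · rw [hb] at h1; rw [hb'] at h2
      simp only [Bool.false_eq_true, if_false, if_true, Left.nonneg_neg_iff] at h1 h2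
      linarith
    · exact absurd (hb.trans hb'.symm) hi
  -- cross-polytope volume from mathlib
  have hcross := MeasureTheory.volume_sum_rpow_le (ι := Fin n) (p := 1) le_rfl c
  simp only [Real.rpow_one, one_div_one, Real.rpow_natCast, Fintype.card_fin, div_one,
    show (1 : ℝ) + 1 = (2 : ℝ) by norm_num, Real.Gamma_two, mul_one,
    Real.Gamma_nat_eq_factorial] at hcross
  have key : (2 : ℝ≥0∞) ^ n * volume A = (2 : ℝ≥0∞) ^ n * ENNReal.ofReal (c ^ n / n.factorial) := by
    calc (2 : ℝ≥0∞) ^ n * volume A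
        = ∑ ε : Fin n → Bool, volume (f ε ⁻¹' A) := by
          rw [Finset.sum_congr rfl fun ε _ =>
            (hf ε).measure_preimage hAm.nullMeasurableSet]
          rw [Finset.sum_const, Finset.card_univ, Fintype.card_fun]
          simp only [Fintype.card_bool, Fintype.card_fin, nsmul_eq_mul]
          norm_cast
      _ = volume {x : Fin n → ℝ | ∑ i, |x i| ≤ c} := by
          rw [hB, measure_biUnion_finset₀ hdisj
            (fun ε _ => (hAm.preimage (hf ε).measurable).nullMeasurableSet)]
      _ = ENNReal.ofReal c ^ n * ENNReal.ofReal (2 ^ n / n.factorial) := by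
          rw [← hcross]
      _ = (2 : ℝ≥0∞) ^ n * ENNReal.ofReal (c ^ n / n.factorial) := by
          rw [← ENNReal.ofReal_pow hc,
            ← ENNReal.ofReal_mul (by positivity),
            show ((2 : ℝ≥0∞) ^ n) = ENNReal.ofReal (2 ^ n) by
              rw [ENNReal.ofReal_pow (by norm_num : (0:ℝ) ≤ 2)]; norm_num,
            ← ENNReal.ofReal_mul (by positivity)]
          congr 1
          ring
  exact (ENNReal.mul_right_inj (by positivity) (ENNReal.pow_ne_top (by norm_num))).mp key

/-- For `(m-1)/(2m) ≤ t ≤ 1/2`, the volume cut off from the unit cube by the `m`-negative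
inequality equals `(1/n!) · (m - (m-1)/(2t))ⁿ`. -/
theorem stmt10 (n m : ℕ) (hm : 2 ≤ m) (hmn : m ≤ n) (S : Finset (Fin n)) (hS : S.card = m)
    (t : ℝ) (ht0 : ((m : ℝ) - 1) / (2 * m) ≤ t) (ht1 : t ≤ 1 / 2) :
    volume {x : Fin n → ℝ |
        (∀ i, 0 ≤ x i ∧ x i ≤ 1) ∧
        ((m : ℝ) - 1) / (2 * t) + n - 2 * m ≤ (∑ i ∈ Sᶜ, x i) - ∑ i ∈ S, x i} =
      ENNReal.ofReal ((1 / n.factorial) * ((m : ℝ) - ((m : ℝ) - 1) / (2 * t)) ^ n) := by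
  have hn : 0 < n := lt_of_lt_of_le (by omega) hmn
  have hm1 : (1 : ℝ) ≤ (m : ℝ) - 1 := by
    have : (2 : ℝ) ≤ m := by exact_mod_cast hm
    linarith
  have htpos : 0 < t := by
    have hmpos : (0 : ℝ) < m := by positivity
    have : (0 : ℝ) < ((m : ℝ) - 1) / (2 * m) := by positivity
    linarith
  set c : ℝ := (m : ℝ) - ((m : ℝ) - 1) / (2 * t) with hc_def
  have h2t : (0 : ℝ) < 2 * t := by linarith
  have hdiv : ((m : ℝ) - 1) / (2 * t) ≤ m := by
    rw [div_le_iff₀ h2t]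
    have := (div_le_iff₀ (by positivity : (0:ℝ) < 2 * m)).mp ht0
    linarith
  have hdiv1 : (m : ℝ) - 1 ≤ ((m : ℝ) - 1) / (2 * t) := by
    rw [le_div_iff₀ h2t]
    nlinarith
  have hc0 : 0 ≤ c := by rw [hc_def]; linarith
  have hc1 : c ≤ 1 := by rw [hc_def]; linarith
  -- the coordinate-flipping map
  set g : (Fin n → ℝ) → (Fin n → ℝ) := fun x i => if i ∈ S then x i else 1 - x i with hg_def
  have hg : MeasurePreserving g volume volume := by
    apply volume_preserving_pi (f := fun i (u : ℝ) => if i ∈ S then u else 1 - u)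
    intro i
    by_cases h : i ∈ S
    · simp only [h, if_true, ↓reduceIte]; exact MeasurePreserving.id (volume : Measure ℝ)
    · have : MeasurePreserving (fun u : ℝ => 1 - u) volume volume := by
        have h1 : (fun u : ℝ => 1 - u) = (fun u : ℝ => 1 + u) ∘ (fun u : ℝ => -u) := by
          funext u; simp [sub_eq_add_neg]
        rw [h1]
        exact (measurePreserving_add_left (volume : Measure ℝ) 1).comp
          (Measure.measurePreserving_neg _)
      simpa [h] using this
  set A : Set (Fin n → ℝ) := {x | (∀ i, 0 ≤ x i) ∧ ∑ i, x i ≤ c} with hA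
  -- sum identity
  have hsum : ∀ x : Fin n → ℝ, ∑ i, g x i = (∑ i ∈ S, x i) + ((n : ℝ) - m) - ∑ i ∈ Sᶜ, x i := by
    intro x
    rw [← Finset.sum_add_sum_compl S (g x)]
    have h1 : ∑ i ∈ S, g x i = ∑ i ∈ S, x i :=
      Finset.sum_congr rfl fun i hi => by simp [hg_def, hi]
    have h2 : ∑ i ∈ Sᶜ, g x i = ∑ i ∈ Sᶜ, (1 - x i) :=
      Finset.sum_congr rfl fun i hi => by
        simp only [Finset.mem_compl] at hi
        simp [hg_def, hi]
    have h3 : ∑ i ∈ Sᶜ, ((1 : ℝ) - x i) = ((n : ℝ) - m) - ∑ i ∈ Sᶜ, x i := by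
      rw [Finset.sum_sub_distrib, Finset.sum_const]
      have hcard : Sᶜ.card = n - m := by
        rw [Finset.card_compl, hS]; simp
      rw [hcard, nsmul_eq_mul, mul_one, Nat.cast_sub hmn]
    rw [h1, h2, h3]; ring
  -- set equality
  have hset : {x : Fin n → ℝ |
        (∀ i, 0 ≤ x i ∧ x i ≤ 1) ∧
        ((m : ℝ) - 1) / (2 * t) + n - 2 * m ≤ (∑ i ∈ Sᶜ, x i) - ∑ i ∈ S, x i} = g ⁻¹' A := by
    ext x
    simp only [Set.mem_setOf_eq, Set.mem_preimage, hA]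
    constructor
    · rintro ⟨hx1, hx2⟩
      refine ⟨fun i => ?_, ?_⟩
      · by_cases h : i ∈ S
        · simpa [hg_def, h] using (hx1 i).1
        · have := (hx1 i).2; simp only [hg_def, h, if_false]; linarith
      · rw [hsum x, hc_def]; linarith
    · rintro ⟨hx1, hx2⟩
      have hxle : ∀ i, g x i ≤ 1 := by
        intro i
        calc g x i ≤ ∑ j, g x j :=
              Finset.single_le_sum (fun j _ => hx1 j) (Finset.mem_univ i)
          _ ≤ c := hx2
          _ ≤ 1 := hc1
      refine ⟨fun i => ?_, ?_⟩
      · have h0 := hx1 i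
        have h1 := hxle i
        by_cases h : i ∈ S <;> simp only [hg_def, h, if_true, if_false] at h0 h1 <;>
          constructor <;> linarith
      · rw [hsum x, hc_def] at hx2; linarith
  rw [hset, hg.measure_preimage (simplex_measurable n c).nullMeasurableSet,
    simplex_vol n hn c hc0]
  congr 1
  rw [div_eq_mul_inv, one_div, mul_comm]
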